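/- Let k be a field of characteristic different from 2. The set Z³_h(C₂×C₂, k*) of happy normalized 3-cocycles on C₂×C₂ with coefficients in k* is a group under pointwise multiplication, and it is isomorphic, as a group, to C₂ × C₂ × C₂ × k* × k*. -/

import Mathlib

def IsCocycle {k : Type*} [Field k] {G : Type*} [Group G] (φ : G → G → G → kˣ) : Prop :=
  ∀ x y z t : G, φ y z t * φ x (y * z) t * φ x y z = φ (x * y) z t * φ x y (z * t)

def IsNormalized {k : Type*} [Field k] {G : Type*} [Group G] (φ : G → G → G → kˣ) : Prop :=
  ∀ x z : G, φ x 1 z = 1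

def d2 {k : Type*} [Field k] {G : Type*} [Group G] (g : G → G → kˣ) : G → G → G → kˣ :=
  fun x y z => g y z * (g (x * y) z)⁻¹ * g x (y * z) * (g x y)⁻¹

def IsCoboundary {k : Type*} [Field k] {G : Type*} [Group G] (φ : G → G → G → kˣ) : Prop :=
  ∃ g : G → G → kˣ, φ = d2 g

/-- The Klein four-group `C₂ × C₂`, written multiplicatively. -/
abbrev K : Type := Multiplicative (ZMod 2 × ZMod 2)

def σ : K := Multiplicative.ofAdd (1, 0)
def τ : K := Multiplicative.ofAdd (0, 1)
def ρ : K := Multiplicative.ofAdd (1, 1)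

/-- A normalized 3-cocycle on the Klein group is happy if it takes the value
`p = ε_σ · ε_τ · ε_ρ` on each permutation of `(σ, τ, ρ)`. -/
def IsHappy {k : Type*} [Field k] (φ : K → K → K → kˣ) : Prop :=
  ∀ x y z : K, List.Perm [x, y, z] [σ, τ, ρ] →
    φ x y z = φ σ σ σ * φ τ τ τ * φ ρ ρ ρ

/-- The group `Z³_h(C₂×C₂, kˣ)` of happy normalized 3-cocycles on the Klein group,
under pointwise multiplication. -/
def Z3h (k : Type*) [Field k] : Subgroup (K → K → K → kˣ) where
  carrier := {φ : K → K → K → kˣ | IsCocycle φ ∧ IsNormalized φ ∧ IsHappy φ}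
  one_mem' := by
    refine ⟨?_, ?_, ?_⟩
    · intro x y z t; simp
    · intro x z; rfl
    · intro x y z _; simp
  mul_mem' := by
    intro a b ha hb
    obtain ⟨hac, han, hah⟩ : IsCocycle a ∧ IsNormalized a ∧ IsHappy a := ha
    obtain ⟨hbc, hbn, hbh⟩ : IsCocycle b ∧ IsNormalized b ∧ IsHappy b := hb
    refine ⟨?_, ?_, ?_⟩
    · intro x y z t
      simp only [Pi.mul_apply]
      simpa only [mul_assoc, mul_left_comm, mul_comm] using
        congrArg₂ (· * ·) (hac x y z t) (hbc x y z t)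
    · intro x z
      simp only [Pi.mul_apply, han x z, hbn x z, one_mul]
    · intro x y z hperm
      simp only [Pi.mul_apply, hah x y z hperm, hbh x y z hperm]
      simp only [mul_assoc, mul_left_comm, mul_comm]
  inv_mem' := by
    intro a ha
    obtain ⟨hac, han, hah⟩ : IsCocycle a ∧ IsNormalized a ∧ IsHappy a := ha
    refine ⟨?_, ?_, ?_⟩
    · intro x y z t
      simp only [Pi.inv_apply]
      simpa only [mul_inv, mul_assoc, mul_left_comm, mul_comm] using
        congrArg (·⁻¹) (hac x y z t)
    · intro x z
      simp only [Pi.inv_apply, han x z, inv_one]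
    · intro x y z hperm
      simp only [Pi.inv_apply, hah x y z hperm]
      simp only [mul_inv, mul_assoc, mul_left_comm, mul_comm]


namespace Hpy
variable (k : Type*) [Field k]

def sgn : Multiplicative (ZMod 2) →* kˣ where
  toFun a := if Multiplicative.toAdd a = 0 then 1 else -1
  map_one' := by simp
  map_mul' a b := by
    have h : ∀ m : Multiplicative (ZMod 2), m = Multiplicative.ofAdd 0 ∨ m = Multiplicative.ofAdd 1 := by
      decide
    rcases h a with rfl | rfl <;> rcases h b with rfl | rfl <;>
      simp [← ofAdd_add, show ((0:ZMod 2)+0 = 0) from by decide, show ((0:ZMod 2)+1 = 1) from by decide,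
        show ((1:ZMod 2)+0 = 1) from by decide, show ((1:ZMod 2)+1 = 0) from by decide,
        show (1:ZMod 2) ≠ 0 from by decide]

def c1 (x : K) : ZMod 2 := (Multiplicative.toAdd x).1
def c2 (x : K) : ZMod 2 := (Multiplicative.toAdd x).2

def EA (x y z : K) : ZMod 2 :=
  c1 x * c1 y * c1 z + c1 x * c2 y * c2 z + c2 x * c1 y * c2 z + c2 x * c2 y * c1 z
def EB (x y z : K) : ZMod 2 :=
  c1 x * c1 y * c2 z + c1 x * c2 y * c1 z + c2 x * c1 y * c1 z + c2 x * c2 y * c2 z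
def EC (x y z : K) : ZMod 2 :=
  c1 x * c2 y * c2 z + c2 x * c1 y * c2 z + c2 x * c2 y * c1 z
def EU (x y z : K) : ℤ :=
  if x = z ∧ x ≠ 1 ∧ y ≠ 1 ∧ x ≠ y then
    (if (x, y) = (σ, ρ) ∨ (x, y) = (τ, σ) ∨ (x, y) = (ρ, τ) then 1 else -1) else 0
def EV (x y z : K) : ℤ :=
  if x ≠ 1 ∧ y ≠ 1 ∧ z ≠ 1 then
    (if y = z ∧ x ≠ y then 1 else 0) - (if x = y ∧ y ≠ z then 1 else 0) else 0

lemma EAc : ∀ x y z t : K, EA y z t + EA x (y*z) t + EA x y z = EA (x*y) z t + EA x y (z*t) := by decide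
lemma EBc : ∀ x y z t : K, EB y z t + EB x (y*z) t + EB x y z = EB (x*y) z t + EB x y (z*t) := by decide
lemma ECc : ∀ x y z t : K, EC y z t + EC x (y*z) t + EC x y z = EC (x*y) z t + EC x y (z*t) := by decide
lemma EUc : ∀ x y z t : K, EU y z t + EU x (y*z) t + EU x y z = EU (x*y) z t + EU x y (z*t) := by decide
lemma EVc : ∀ x y z t : K, EV y z t + EV x (y*z) t + EV x y z = EV (x*y) z t + EV x y (z*t) := by decide
lemma EAn : ∀ x z : K, EA x 1 z = 0 := by decide
lemma EBn : ∀ x z : K, EB x 1 z = 0 := by decide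
lemma ECn : ∀ x z : K, EC x 1 z = 0 := by decide
lemma EUn : ∀ x z : K, EU x 1 z = 0 := by decide
lemma EVn : ∀ x z : K, EV x 1 z = 0 := by decide
lemma EAh : ∀ x y z : K, List.Perm [x,y,z] [σ,τ,ρ] → EA x y z = EA σ σ σ + EA τ τ τ + EA ρ ρ ρ := by decide
lemma EBh : ∀ x y z : K, List.Perm [x,y,z] [σ,τ,ρ] → EB x y z = EB σ σ σ + EB τ τ τ + EB ρ ρ ρ := by decide
lemma ECh : ∀ x y z : K, List.Perm [x,y,z] [σ,τ,ρ] → EC x y z = EC σ σ σ + EC τ τ τ + EC ρ ρ ρ := by decide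
lemma EUh : ∀ x y z : K, List.Perm [x,y,z] [σ,τ,ρ] → EU x y z = EU σ σ σ + EU τ τ τ + EU ρ ρ ρ := by decide
lemma EVh : ∀ x y z : K, List.Perm [x,y,z] [σ,τ,ρ] → EV x y z = EV σ σ σ + EV τ τ τ + EV ρ ρ ρ := by decide

variable {k}

def pw (s : kˣ) (m : ZMod 2) : kˣ := if m = 0 then 1 else s

lemma pw_zero' (s : kˣ) : pw s 0 = 1 := by simp [pw]
lemma pw_one' (s : kˣ) : pw s 1 = s := by
  rw [pw, if_neg (by decide)]
lemma pw_add {s : kˣ} (hs : s * s = 1) (m n : ZMod 2) : pw s (m + n) = pw s m * pw s n := by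
  have h : ∀ m : ZMod 2, m = 0 ∨ m = 1 := by decide
  rcases h m with rfl | rfl <;> rcases h n with rfl | rfl <;>
    simp [pw_zero', pw_one', show ((1:ZMod 2)+1 = 0) from by decide, hs]
lemma pw_mul (s t : kˣ) (m : ZMod 2) : pw (s * t) m = pw s m * pw t m := by
  have h : ∀ m : ZMod 2, m = 0 ∨ m = 1 := by decide
  rcases h m with rfl | rfl <;> simp [pw_zero', pw_one']
lemma pw_one_left (m : ZMod 2) : pw (1 : kˣ) m = 1 := by
  have h : ∀ m : ZMod 2, m = 0 ∨ m = 1 := by decide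
  rcases h m with rfl | rfl <;> simp [pw_zero', pw_one']

def PhiU (u : kˣ) : K → K → K → kˣ := fun x y z => u ^ EU x y z
def PhiV (v : kˣ) : K → K → K → kˣ := fun x y z => v ^ EV x y z

lemma memU (u : kˣ) : PhiU u ∈ Z3h k := by
  refine ⟨?_, ?_, ?_⟩
  · intro x y z t
    show u ^ _ * u ^ _ * u ^ _ = u ^ _ * u ^ _
    rw [← zpow_add, ← zpow_add, ← zpow_add, EUc]
  · intro x z
    show u ^ _ = 1
    rw [EUn, zpow_zero]
  · intro x y z h
    show u ^ _ = u ^ _ * u ^ _ * u ^ _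
    rw [← zpow_add, ← zpow_add, EUh x y z h]

lemma memV (v : kˣ) : PhiV v ∈ Z3h k := by
  refine ⟨?_, ?_, ?_⟩
  · intro x y z t
    show v ^ _ * v ^ _ * v ^ _ = v ^ _ * v ^ _
    rw [← zpow_add, ← zpow_add, ← zpow_add, EVc]
  · intro x z
    show v ^ _ = 1
    rw [EVn, zpow_zero]
  · intro x y z h
    show v ^ _ = v ^ _ * v ^ _ * v ^ _
    rw [← zpow_add, ← zpow_add, EVh x y z h]

variable (k)

lemma sgn_sq (a : Multiplicative (ZMod 2)) : sgn k a * sgn k a = 1 := by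
  rw [← map_mul, show a * a = 1 from by
    have h : ∀ m : Multiplicative (ZMod 2), m * m = 1 := by decide
    exact h a, map_one]

def PhiA (a : Multiplicative (ZMod 2)) : K → K → K → kˣ := fun x y z => pw (sgn k a) (EA x y z)
def PhiB (a : Multiplicative (ZMod 2)) : K → K → K → kˣ := fun x y z => pw (sgn k a) (EB x y z)
def PhiC (a : Multiplicative (ZMod 2)) : K → K → K → kˣ := fun x y z => pw (sgn k a) (EC x y z)

lemma memA (a : Multiplicative (ZMod 2)) : PhiA k a ∈ Z3h k := by
  refine ⟨?_, ?_, ?_⟩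
  · intro x y z t
    show pw _ _ * pw _ _ * pw _ _ = pw _ _ * pw _ _
    rw [← pw_add (sgn_sq k a), ← pw_add (sgn_sq k a), ← pw_add (sgn_sq k a), EAc]
  · intro x z
    show pw _ _ = 1
    rw [EAn, pw_zero']
  · intro x y z h
    show pw _ _ = pw _ _ * pw _ _ * pw _ _
    rw [← pw_add (sgn_sq k a), ← pw_add (sgn_sq k a), EAh x y z h]

lemma memB (a : Multiplicative (ZMod 2)) : PhiB k a ∈ Z3h k := by
  refine ⟨?_, ?_, ?_⟩
  · intro x y z t
    show pw _ _ * pw _ _ * pw _ _ = pw _ _ * pw _ _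
    rw [← pw_add (sgn_sq k a), ← pw_add (sgn_sq k a), ← pw_add (sgn_sq k a), EBc]
  · intro x z
    show pw _ _ = 1
    rw [EBn, pw_zero']
  · intro x y z h
    show pw _ _ = pw _ _ * pw _ _ * pw _ _
    rw [← pw_add (sgn_sq k a), ← pw_add (sgn_sq k a), EBh x y z h]

lemma memC (a : Multiplicative (ZMod 2)) : PhiC k a ∈ Z3h k := by
  refine ⟨?_, ?_, ?_⟩
  · intro x y z t
    show pw _ _ * pw _ _ * pw _ _ = pw _ _ * pw _ _
    rw [← pw_add (sgn_sq k a), ← pw_add (sgn_sq k a), ← pw_add (sgn_sq k a), ECc]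
  · intro x z
    show pw _ _ = 1
    rw [ECn, pw_zero']
  · intro x y z h
    show pw _ _ = pw _ _ * pw _ _ * pw _ _
    rw [← pw_add (sgn_sq k a), ← pw_add (sgn_sq k a), ECh x y z h]

def GA : Multiplicative (ZMod 2) →* Z3h k where
  toFun a := ⟨PhiA k a, memA k a⟩
  map_one' := by
    apply Subtype.ext
    funext x y z
    show pw (sgn k 1) (EA x y z) = 1
    rw [map_one, pw_one_left]
  map_mul' a b := by
    apply Subtype.ext
    funext x y z
    show pw (sgn k (a*b)) (EA x y z) = pw (sgn k a) (EA x y z) * pw (sgn k b) (EA x y z)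
    rw [map_mul, pw_mul]

def GB : Multiplicative (ZMod 2) →* Z3h k where
  toFun a := ⟨PhiB k a, memB k a⟩
  map_one' := by
    apply Subtype.ext
    funext x y z
    show pw (sgn k 1) (EB x y z) = 1
    rw [map_one, pw_one_left]
  map_mul' a b := by
    apply Subtype.ext
    funext x y z
    show pw (sgn k (a*b)) (EB x y z) = pw (sgn k a) (EB x y z) * pw (sgn k b) (EB x y z)
    rw [map_mul, pw_mul]

def GC : Multiplicative (ZMod 2) →* Z3h k where
  toFun a := ⟨PhiC k a, memC k a⟩
  map_one' := by
    apply Subtype.ext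
    funext x y z
    show pw (sgn k 1) (EC x y z) = 1
    rw [map_one, pw_one_left]
  map_mul' a b := by
    apply Subtype.ext
    funext x y z
    show pw (sgn k (a*b)) (EC x y z) = pw (sgn k a) (EC x y z) * pw (sgn k b) (EC x y z)
    rw [map_mul, pw_mul]

def GU : kˣ →* Z3h k where
  toFun u := ⟨PhiU u, memU u⟩
  map_one' := by
    apply Subtype.ext
    funext x y z
    show (1:kˣ) ^ EU x y z = 1
    rw [one_zpow]
  map_mul' u w := by
    apply Subtype.ext
    funext x y z
    show (u*w) ^ EU x y z = u ^ EU x y z * w ^ EU x y z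
    rw [mul_zpow]

def GV : kˣ →* Z3h k where
  toFun v := ⟨PhiV v, memV v⟩
  map_one' := by
    apply Subtype.ext
    funext x y z
    show (1:kˣ) ^ EV x y z = 1
    rw [one_zpow]
  map_mul' u w := by
    apply Subtype.ext
    funext x y z
    show (u*w) ^ EV x y z = u ^ EV x y z * w ^ EV x y z
    rw [mul_zpow]

def bigG : (Multiplicative (ZMod 2) × Multiplicative (ZMod 2) × Multiplicative (ZMod 2) × kˣ × kˣ) →* Z3h k :=
  (GA k).comp (MonoidHom.fst _ _)
  * (GB k).comp ((MonoidHom.fst _ _).comp (MonoidHom.snd _ _))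
  * (GC k).comp ((MonoidHom.fst _ _).comp ((MonoidHom.snd _ _).comp (MonoidHom.snd _ _)))
  * (GU k).comp ((MonoidHom.fst _ _).comp ((MonoidHom.snd _ _).comp ((MonoidHom.snd _ _).comp (MonoidHom.snd _ _))))
  * (GV k).comp ((MonoidHom.snd _ _).comp ((MonoidHom.snd _ _).comp ((MonoidHom.snd _ _).comp (MonoidHom.snd _ _))))

lemma bigG_eval (a b c : Multiplicative (ZMod 2)) (u v : kˣ) (x y z : K) :
    ((bigG k (a,b,c,u,v) : Z3h k) : K → K → K → kˣ) x y z =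
      pw (sgn k a) (EA x y z) * pw (sgn k b) (EB x y z) * pw (sgn k c) (EC x y z)
        * u ^ EU x y z * v ^ EV x y z := rfl

lemma neg_one_ne_one (hk : ringChar k ≠ 2) : (-1 : kˣ) ≠ 1 := by
  intro h
  exact Ring.neg_one_ne_one_of_char_ne_two hk
    (by rw [← Units.coe_neg_one, h, Units.val_one])

lemma sgn_inj (hk : ringChar k ≠ 2) : Function.Injective (sgn k) := by
  intro a b hab
  have h2 : ∀ m : Multiplicative (ZMod 2), m = Multiplicative.ofAdd 0 ∨ m = Multiplicative.ofAdd 1 := by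
    decide
  have hval : sgn k (Multiplicative.ofAdd 0) = 1 ∧ sgn k (Multiplicative.ofAdd 1) = -1 := by
    constructor
    · simp [sgn]
    · simp [sgn, show (1:ZMod 2) ≠ 0 from by decide]
  rcases h2 a with rfl|rfl <;> rcases h2 b with rfl|rfl
  · rfl
  · rw [hval.1, hval.2] at hab; exact absurd hab.symm (neg_one_ne_one k hk)
  · rw [hval.1, hval.2] at hab; exact absurd hab (neg_one_ne_one k hk)
  · rfl

lemma bigG_inj (hk : ringChar k ≠ 2) : Function.Injective (bigG k) := by
  intro p q h
  obtain ⟨a, b, c, u, v⟩ := p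
  obtain ⟨a', b', c', u', v'⟩ := q
  have hval : ((bigG k (a,b,c,u,v) : Z3h k) : K → K → K → kˣ) = ((bigG k (a',b',c',u',v') : Z3h k) : K → K → K → kˣ) := by
    rw [h]
  have ev : ∀ (x y z : K) (a0 b0 c0 : Multiplicative (ZMod 2)) (u0 v0 : kˣ),
      ((bigG k (a0,b0,c0,u0,v0) : Z3h k) : K → K → K → kˣ) x y z =
        pw (sgn k a0) (EA x y z) * pw (sgn k b0) (EB x y z) * pw (sgn k c0) (EC x y z)
          * u0 ^ EU x y z * v0 ^ EV x y z := fun _ _ _ _ _ _ _ _ => rfl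
  have h1 := congrFun (congrFun (congrFun hval σ) σ) σ
  have h2 := congrFun (congrFun (congrFun hval τ) τ) τ
  have h3 := congrFun (congrFun (congrFun hval ρ) ρ) ρ
  have h4 := congrFun (congrFun (congrFun hval ρ) τ) ρ
  have h5 := congrFun (congrFun (congrFun hval τ) ρ) ρ
  rw [ev, ev, show EA σ σ σ = 1 from by decide, show EB σ σ σ = 0 from by decide,
    show EC σ σ σ = 0 from by decide, show EU σ σ σ = 0 from by decide,
    show EV σ σ σ = 0 from by decide] at h1
  simp only [pw_zero', pw_one', zpow_zero, mul_one] at h1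
  rw [ev, ev, show EA τ τ τ = 0 from by decide, show EB τ τ τ = 1 from by decide,
    show EC τ τ τ = 0 from by decide, show EU τ τ τ = 0 from by decide,
    show EV τ τ τ = 0 from by decide] at h2
  simp only [pw_zero', pw_one', zpow_zero, mul_one, one_mul] at h2
  rw [ev, ev, show EA ρ ρ ρ = 0 from by decide, show EB ρ ρ ρ = 0 from by decide,
    show EC ρ ρ ρ = 1 from by decide, show EU ρ ρ ρ = 0 from by decide,
    show EV ρ ρ ρ = 0 from by decide] at h3
  simp only [pw_zero', pw_one', zpow_zero, mul_one, one_mul] at h3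
  rw [ev, ev, show EA ρ τ ρ = 0 from by decide, show EB ρ τ ρ = 0 from by decide,
    show EC ρ τ ρ = 0 from by decide, show EU ρ τ ρ = 1 from by decide,
    show EV ρ τ ρ = 0 from by decide] at h4
  simp only [pw_zero', pw_one', zpow_zero, zpow_one, mul_one, one_mul] at h4
  rw [ev, ev, show EA τ ρ ρ = 0 from by decide, show EB τ ρ ρ = 0 from by decide,
    show EC τ ρ ρ = 0 from by decide, show EU τ ρ ρ = 0 from by decide,
    show EV τ ρ ρ = 1 from by decide] at h5
  simp only [pw_zero', pw_one', zpow_zero, zpow_one, mul_one, one_mul] at h5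
  simp only [Prod.mk.injEq]
  exact ⟨sgn_inj k hk h1, sgn_inj k hk h2, sgn_inj k hk h3, h4, h5⟩

lemma bigG_surj (hk : ringChar k ≠ 2) : Function.Surjective (bigG k) := by
  rintro ⟨φ, hcoc, hnorm, hhappy⟩
  classical
  have kss : σ * σ = (1:K) := by decide
  have kst : σ * τ = ρ := by decide
  have ksr : σ * ρ = τ := by decide
  have kts : τ * σ = ρ := by decide
  have ktt : τ * τ = (1:K) := by decide
  have ktr : τ * ρ = σ := by decide
  have krs : ρ * σ = τ := by decide
  have krt : ρ * τ = σ := by decide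
  have krr : ρ * ρ = (1:K) := by decide
  have hone : ∀ y z : K, φ 1 y z = 1 := by
    intro y z
    have h := hcoc 1 1 y z
    simp only [one_mul] at h
    rw [hnorm 1 y, hnorm 1 (y*z)] at h
    simp only [mul_one] at h
    exact mul_eq_right.mp h
  have hlast : ∀ x y : K, φ x y 1 = 1 := by
    intro x y
    have h := hcoc x y 1 1
    simp only [mul_one, one_mul] at h
    rw [hnorm y 1, hnorm (x*y) 1] at h
    simp only [one_mul] at h
    exact mul_eq_right.mp h
  have hS2 : φ σ σ σ * φ σ σ σ = 1 := by
    have h := hcoc σ σ σ σ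
    simp only [kss] at h
    rw [hnorm σ σ, hone σ σ, hlast σ σ] at h
    simpa using h
  have hT2 : φ τ τ τ * φ τ τ τ = 1 := by
    have h := hcoc τ τ τ τ
    simp only [ktt] at h
    rw [hnorm τ τ, hone τ τ, hlast τ τ] at h
    simpa using h
  have hR2 : φ ρ ρ ρ * φ ρ ρ ρ = 1 := by
    have h := hcoc ρ ρ ρ ρ
    simp only [krr] at h
    rw [hnorm ρ ρ, hone ρ ρ, hlast ρ ρ] at h
    simpa using h
  have hSi : (φ σ σ σ)⁻¹ = φ σ σ σ := inv_eq_of_mul_eq_one_right hS2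
  have hTi : (φ τ τ τ)⁻¹ = φ τ τ τ := inv_eq_of_mul_eq_one_right hT2
  have hRi : (φ ρ ρ ρ)⁻¹ = φ ρ ρ ρ := inv_eq_of_mul_eq_one_right hR2
  have hSw : ∀ w : kˣ, φ σ σ σ * (φ σ σ σ * w) = w := fun w => by
    rw [← mul_assoc, hS2, one_mul]
  have hTw : ∀ w : kˣ, φ τ τ τ * (φ τ τ τ * w) = w := fun w => by
    rw [← mul_assoc, hT2, one_mul]
  have hRw : ∀ w : kˣ, φ ρ ρ ρ * (φ ρ ρ ρ * w) = w := fun w => by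
    rw [← mul_assoc, hR2, one_mul]
  have hd113 : φ σ σ ρ = φ σ σ σ * φ τ τ τ * (φ τ ρ ρ)⁻¹ := by
    have h := hcoc σ τ ρ ρ
    simp only [kss, kst, ksr, kts, ktt, ktr, krs, krt, krr] at h
    rw [hhappy σ τ ρ (by decide), hlast σ τ] at h
    have h' : φ σ σ ρ = (φ τ ρ ρ)⁻¹ * ((φ ρ ρ ρ) * 1) * (φ σ σ σ * φ τ τ τ * φ ρ ρ ρ)⁻¹ := by rw [← h]; group
    rw [h']
    try simp only [mul_inv, inv_inv, hSi, hTi, hRi]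
    all_goals simp [mul_comm, mul_left_comm, mul_assoc, hS2, hT2, hR2, hSw, hTw, hRw]
  have hd133 : φ σ ρ ρ = φ ρ ρ ρ * φ τ ρ ρ := by
    have h := hcoc σ ρ ρ ρ
    simp only [kss, kst, ksr, kts, ktt, ktr, krs, krt, krr] at h
    rw [hnorm σ ρ, hlast σ ρ] at h
    have h' : φ σ ρ ρ = ((φ ρ ρ ρ) * 1)⁻¹ * ((φ τ ρ ρ) * 1) := by rw [← h]; group
    rw [h']
    try simp only [mul_inv, inv_inv, hSi, hTi, hRi]
    all_goals simp [mul_comm, mul_left_comm, mul_assoc, hS2, hT2, hR2, hSw, hTw, hRw]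
  have hd223 : φ τ τ ρ = φ σ σ σ * φ τ τ τ * φ ρ ρ ρ * (φ τ ρ ρ)⁻¹ := by
    have h := hcoc τ σ ρ ρ
    simp only [kss, kst, ksr, kts, ktt, ktr, krs, krt, krr] at h
    rw [hd133, hhappy τ σ ρ (by decide), hlast τ σ] at h
    have h' : φ τ τ ρ = (φ ρ ρ ρ * φ τ ρ ρ)⁻¹ * ((φ ρ ρ ρ) * 1) * (φ σ σ σ * φ τ τ τ * φ ρ ρ ρ)⁻¹ := by rw [← h]; group
    rw [h']
    try simp only [mul_inv, inv_inv, hSi, hTi, hRi]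
    all_goals simp [mul_comm, mul_left_comm, mul_assoc, hS2, hT2, hR2, hSw, hTw, hRw]
  have hd221 : φ τ τ σ = φ σ σ σ * φ ρ ρ ρ * (φ τ ρ ρ)⁻¹ := by
    have h := hcoc τ τ σ ρ
    simp only [kss, kst, ksr, kts, ktt, ktr, krs, krt, krr] at h
    rw [hhappy τ σ ρ (by decide), hone σ ρ] at h
    have h' : φ τ τ σ = ((φ σ σ σ * φ τ τ τ * φ ρ ρ ρ) * (φ τ ρ ρ))⁻¹ * (1 * (φ τ τ τ)) := by rw [← h]; group
    rw [h']
    try simp only [mul_inv, inv_inv, hSi, hTi, hRi]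
    all_goals simp [mul_comm, mul_left_comm, mul_assoc, hS2, hT2, hR2, hSw, hTw, hRw]
  have hd211 : φ τ σ σ = φ τ τ τ * φ τ ρ ρ := by
    have h := hcoc τ τ ρ σ
    simp only [kss, kst, ksr, kts, ktt, ktr, krs, krt, krr] at h
    rw [hhappy τ ρ σ (by decide), hd223, hone ρ σ] at h
    have h' : φ τ σ σ = (φ σ σ σ * φ τ τ τ * φ ρ ρ ρ)⁻¹ * (1 * (φ τ τ τ)) * (φ σ σ σ * φ τ τ τ * φ ρ ρ ρ * (φ τ ρ ρ)⁻¹)⁻¹ := by rw [← h]; group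
    rw [h']
    try simp only [mul_inv, inv_inv, hSi, hTi, hRi]
    all_goals simp [mul_comm, mul_left_comm, mul_assoc, hS2, hT2, hR2, hSw, hTw, hRw]
  have hd311 : φ ρ σ σ = φ σ σ σ * φ τ τ τ * φ τ ρ ρ := by
    have h := hcoc τ ρ σ σ
    simp only [kss, kst, ksr, kts, ktt, ktr, krs, krt, krr] at h
    rw [hd221, hhappy τ ρ σ (by decide), hlast τ ρ] at h
    have h' : φ ρ σ σ = (φ σ σ σ) * 1 * ((φ σ σ σ * φ ρ ρ ρ * (φ τ ρ ρ)⁻¹) * (φ σ σ σ * φ τ τ τ * φ ρ ρ ρ))⁻¹ := by rw [← h]; group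
    rw [h']
    try simp only [mul_inv, inv_inv, hSi, hTi, hRi]
    all_goals simp [mul_comm, mul_left_comm, mul_assoc, hS2, hT2, hR2, hSw, hTw, hRw]
  have hd112 : φ σ σ τ = φ τ τ τ * (φ τ ρ ρ)⁻¹ := by
    have h := hcoc τ ρ σ τ
    simp only [kss, kst, ksr, kts, ktt, ktr, krs, krt, krr] at h
    rw [hhappy ρ σ τ (by decide), hhappy τ ρ σ (by decide)] at h
    have h' : φ σ σ τ = (φ σ σ σ * φ τ τ τ * φ ρ ρ ρ) * (φ τ τ τ) * (φ σ σ σ * φ τ τ τ * φ ρ ρ ρ) * (φ τ ρ ρ)⁻¹ := by rw [h]; group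
    rw [h']
    try simp only [mul_inv, inv_inv, hSi, hTi, hRi]
    all_goals simp [mul_comm, mul_left_comm, mul_assoc, hS2, hT2, hR2, hSw, hTw, hRw]
  have hd232 : φ τ ρ τ = φ σ σ σ * φ τ τ τ * φ ρ ρ ρ * (φ ρ τ ρ)⁻¹ := by
    have h := hcoc τ ρ τ ρ
    simp only [kss, kst, ksr, kts, ktt, ktr, krs, krt, krr] at h
    rw [hhappy τ σ ρ (by decide), hhappy σ τ ρ (by decide), hhappy τ ρ σ (by decide)] at h
    have h' : φ τ ρ τ = ((φ ρ τ ρ) * (φ σ σ σ * φ τ τ τ * φ ρ ρ ρ))⁻¹ * ((φ σ σ σ * φ τ τ τ * φ ρ ρ ρ) * (φ σ σ σ * φ τ τ τ * φ ρ ρ ρ)) := by rw [← h]; group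
    rw [h']
    try simp only [mul_inv, inv_inv, hSi, hTi, hRi]
    all_goals simp [mul_comm, mul_left_comm, mul_assoc, hS2, hT2, hR2, hSw, hTw, hRw]
  have hd332 : φ ρ ρ τ = (φ τ ρ ρ)⁻¹ := by
    have h := hcoc τ ρ ρ τ
    simp only [kss, kst, ksr, kts, ktt, ktr, krs, krt, krr] at h
    rw [hnorm τ τ, hhappy σ ρ τ (by decide), hhappy τ ρ σ (by decide)] at h
    have h' : φ ρ ρ τ = (φ σ σ σ * φ τ τ τ * φ ρ ρ ρ) * (φ σ σ σ * φ τ τ τ * φ ρ ρ ρ) * (1 * (φ τ ρ ρ))⁻¹ := by rw [← h]; group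
    rw [h']
    try simp only [mul_inv, inv_inv, hSi, hTi, hRi]
    all_goals simp [mul_comm, mul_left_comm, mul_assoc, hS2, hT2, hR2, hSw, hTw, hRw]
  have hd122 : φ σ τ τ = φ σ σ σ * φ ρ ρ ρ * φ τ ρ ρ := by
    have h := hcoc ρ σ τ τ
    simp only [kss, kst, ksr, kts, ktt, ktr, krs, krt, krr] at h
    rw [hd332, hhappy ρ σ τ (by decide), hlast ρ σ] at h
    have h' : φ σ τ τ = (φ τ τ τ) * 1 * ((φ τ ρ ρ)⁻¹ * (φ σ σ σ * φ τ τ τ * φ ρ ρ ρ))⁻¹ := by rw [← h]; group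
    rw [h']
    try simp only [mul_inv, inv_inv, hSi, hTi, hRi]
    all_goals simp [mul_comm, mul_left_comm, mul_assoc, hS2, hT2, hR2, hSw, hTw, hRw]
  have hd313 : φ ρ σ ρ = φ ρ ρ ρ * (φ ρ τ ρ)⁻¹ := by
    have h := hcoc ρ σ ρ ρ
    simp only [kss, kst, ksr, kts, ktt, ktr, krs, krt, krr] at h
    rw [hd133, hlast ρ σ] at h
    have h' : φ ρ σ ρ = ((φ ρ ρ ρ * φ τ ρ ρ) * (φ ρ τ ρ))⁻¹ * ((φ τ ρ ρ) * 1) := by rw [← h]; group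
    rw [h']
    try simp only [mul_inv, inv_inv, hSi, hTi, hRi]
    all_goals simp [mul_comm, mul_left_comm, mul_assoc, hS2, hT2, hR2, hSw, hTw, hRw]
  have hd331 : φ ρ ρ σ = φ ρ ρ ρ * (φ τ ρ ρ)⁻¹ := by
    have h := hcoc ρ τ σ σ
    simp only [kss, kst, ksr, kts, ktt, ktr, krs, krt, krr] at h
    rw [hd211, hhappy ρ τ σ (by decide), hlast ρ τ] at h
    have h' : φ ρ ρ σ = (φ τ τ τ * φ τ ρ ρ)⁻¹ * ((φ σ σ σ) * 1) * (φ σ σ σ * φ τ τ τ * φ ρ ρ ρ)⁻¹ := by rw [← h]; group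
    rw [h']
    try simp only [mul_inv, inv_inv, hSi, hTi, hRi]
    all_goals simp [mul_comm, mul_left_comm, mul_assoc, hS2, hT2, hR2, hSw, hTw, hRw]
  have hd212 : φ τ σ τ = φ σ σ σ * φ ρ ρ ρ * φ ρ τ ρ := by
    have h := hcoc ρ τ σ τ
    simp only [kss, kst, ksr, kts, ktt, ktr, krs, krt, krr] at h
    rw [hd332, hhappy ρ τ σ (by decide), hd112] at h
    have h' : φ τ σ τ = (φ τ τ τ * (φ τ ρ ρ)⁻¹) * (φ ρ τ ρ) * ((φ τ ρ ρ)⁻¹ * (φ σ σ σ * φ τ τ τ * φ ρ ρ ρ))⁻¹ := by rw [← h]; group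
    rw [h']
    try simp only [mul_inv, inv_inv, hSi, hTi, hRi]
    all_goals simp [mul_comm, mul_left_comm, mul_assoc, hS2, hT2, hR2, hSw, hTw, hRw]
  have hd322 : φ ρ τ τ = φ σ σ σ * φ τ τ τ * φ ρ ρ ρ * φ τ ρ ρ := by
    have h := hcoc ρ τ σ ρ
    simp only [kss, kst, ksr, kts, ktt, ktr, krs, krt, krr] at h
    rw [hhappy τ σ ρ (by decide), hhappy ρ τ σ (by decide), hd113] at h
    have h' : φ ρ τ τ = (φ σ σ σ * φ τ τ τ * (φ τ ρ ρ)⁻¹)⁻¹ * ((φ σ σ σ * φ τ τ τ * φ ρ ρ ρ) * (φ ρ ρ ρ) * (φ σ σ σ * φ τ τ τ * φ ρ ρ ρ)) := by rw [h]; group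
    rw [h']
    try simp only [mul_inv, inv_inv, hSi, hTi, hRi]
    all_goals simp [mul_comm, mul_left_comm, mul_assoc, hS2, hT2, hR2, hSw, hTw, hRw]
  have hd121 : φ σ τ σ = φ τ τ τ * (φ ρ τ ρ)⁻¹ := by
    have h := hcoc ρ τ τ σ
    simp only [kss, kst, ksr, kts, ktt, ktr, krs, krt, krr] at h
    rw [hd221, hnorm ρ σ, hd322] at h
    have h' : φ σ τ σ = (φ σ σ σ * φ ρ ρ ρ * (φ τ ρ ρ)⁻¹) * 1 * (φ σ σ σ * φ τ τ τ * φ ρ ρ ρ * φ τ ρ ρ) * (φ ρ τ ρ)⁻¹ := by rw [h]; group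
    rw [h']
    try simp only [mul_inv, inv_inv, hSi, hTi, hRi]
    all_goals simp [mul_comm, mul_left_comm, mul_assoc, hS2, hT2, hR2, hSw, hTw, hRw]
  have hd131 : φ σ ρ σ = φ σ σ σ * φ τ τ τ * φ ρ τ ρ := by
    have h := hcoc ρ τ ρ σ
    simp only [kss, kst, ksr, kts, ktt, ktr, krs, krt, krr] at h
    rw [hhappy τ ρ σ (by decide), hd311, hd322] at h
    have h' : φ σ ρ σ = (φ σ σ σ * φ τ τ τ * φ ρ ρ ρ) * (φ σ σ σ * φ τ τ τ * φ τ ρ ρ) * (φ ρ τ ρ) * (φ σ σ σ * φ τ τ τ * φ ρ ρ ρ * φ τ ρ ρ)⁻¹ := by rw [h]; group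
    rw [h']
    try simp only [mul_inv, inv_inv, hSi, hTi, hRi]
    all_goals simp [mul_comm, mul_left_comm, mul_assoc, hS2, hT2, hR2, hSw, hTw, hRw]
  have sgn1 : sgn k (Multiplicative.ofAdd 1) = -1 := by
    simp [sgn, show (1:ZMod 2) ≠ 0 from by decide]
  have hpm : ∀ s : kˣ, s * s = 1 → s = 1 ∨ s = -1 := by
    intro s hs
    have hk2 : (s : k) * (s : k) = 1 := by
      rw [← Units.val_mul, hs, Units.val_one]
    rcases mul_self_eq_one_iff.mp hk2 with h | h
    · exact Or.inl (Units.ext (by rw [h, Units.val_one]))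
    · exact Or.inr (Units.ext (by rw [h, Units.coe_neg_one]))
  set a : Multiplicative (ZMod 2) := if φ σ σ σ = 1 then 1 else Multiplicative.ofAdd 1 with ha
  set b : Multiplicative (ZMod 2) := if φ τ τ τ = 1 then 1 else Multiplicative.ofAdd 1 with hb
  set c : Multiplicative (ZMod 2) := if φ ρ ρ ρ = 1 then 1 else Multiplicative.ofAdd 1 with hc
  have hsa : sgn k a = φ σ σ σ := by
    by_cases h1 : φ σ σ σ = 1
    · rw [ha, if_pos h1, map_one, h1]
    · rw [ha, if_neg h1, sgn1, ((hpm _ hS2).resolve_left h1)]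
  have hsb : sgn k b = φ τ τ τ := by
    by_cases h1 : φ τ τ τ = 1
    · rw [hb, if_pos h1, map_one, h1]
    · rw [hb, if_neg h1, sgn1, ((hpm _ hT2).resolve_left h1)]
  have hsc : sgn k c = φ ρ ρ ρ := by
    by_cases h1 : φ ρ ρ ρ = 1
    · rw [hc, if_pos h1, map_one, h1]
    · rw [hc, if_neg h1, sgn1, ((hpm _ hR2).resolve_left h1)]
  have hE0 : ∀ x y z : K, x = 1 ∨ y = 1 ∨ z = 1 →
      EA x y z = 0 ∧ EB x y z = 0 ∧ EC x y z = 0 ∧ EU x y z = 0 ∧ EV x y z = 0 := by decide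
  have hφtriv : ∀ x y z : K, x = 1 ∨ y = 1 ∨ z = 1 → φ x y z = 1 := by
    rintro x y z (rfl | rfl | rfl)
    · exact hone y z
    · exact hnorm x z
    · exact hlast x y
  have hLtriv : ∀ x y z : K, x = 1 ∨ y = 1 ∨ z = 1 →
      pw (sgn k a) (EA x y z) * pw (sgn k b) (EB x y z) * pw (sgn k c) (EC x y z)
        * (φ ρ τ ρ) ^ EU x y z * (φ τ ρ ρ) ^ EV x y z = φ x y z := by
    intro x y z h
    obtain ⟨e1, e2, e3, e4, e5⟩ := hE0 x y z h
    rw [e1, e2, e3, e4, e5, hφtriv x y z h]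
    simp [pw_zero']
  refine ⟨(a, b, c, φ ρ τ ρ, φ τ ρ ρ), ?_⟩
  apply Subtype.ext
  funext x y z
  rw [bigG_eval]
  have kc : ∀ w : K, w = 1 ∨ w = σ ∨ w = τ ∨ w = ρ := by decide
  rcases kc x with rfl|rfl|rfl|rfl <;> rcases kc y with rfl|rfl|rfl|rfl <;> rcases kc z with rfl|rfl|rfl|rfl
  · exact hLtriv _ _ _ (by decide)
  · exact hLtriv _ _ _ (by decide)
  · exact hLtriv _ _ _ (by decide)
  · exact hLtriv _ _ _ (by decide)
  · exact hLtriv _ _ _ (by decide)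
  · exact hLtriv _ _ _ (by decide)
  · exact hLtriv _ _ _ (by decide)
  · exact hLtriv _ _ _ (by decide)
  · exact hLtriv _ _ _ (by decide)
  · exact hLtriv _ _ _ (by decide)
  · exact hLtriv _ _ _ (by decide)
  · exact hLtriv _ _ _ (by decide)
  · exact hLtriv _ _ _ (by decide)
  · exact hLtriv _ _ _ (by decide)
  · exact hLtriv _ _ _ (by decide)
  · exact hLtriv _ _ _ (by decide)
  · exact hLtriv _ _ _ (by decide)
  · exact hLtriv _ _ _ (by decide)
  · exact hLtriv _ _ _ (by decide)
  · exact hLtriv _ _ _ (by decide)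
  · exact hLtriv _ _ _ (by decide)
  · rw [show EA σ σ σ = 1 from by decide, show EB σ σ σ = 0 from by decide, show EC σ σ σ = 0 from by decide, show EU σ σ σ = 0 from by decide, show EV σ σ σ = 0 from by decide, hsa, hsb, hsc]
    simp only [pw_zero', pw_one', zpow_zero, zpow_one, zpow_neg_one, one_mul, mul_one]
    all_goals first
    | rfl
    | simp [mul_comm, mul_left_comm, mul_assoc]
  · rw [show EA σ σ τ = 0 from by decide, show EB σ σ τ = 1 from by decide, show EC σ σ τ = 0 from by decide, show EU σ σ τ = 0 from by decide, show EV σ σ τ = -1 from by decide, hsa, hsb, hsc]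
    simp only [pw_zero', pw_one', zpow_zero, zpow_one, zpow_neg_one, one_mul, mul_one]
    all_goals rw [hd112]
    all_goals first
    | rfl
    | simp [mul_comm, mul_left_comm, mul_assoc]
  · rw [show EA σ σ ρ = 1 from by decide, show EB σ σ ρ = 1 from by decide, show EC σ σ ρ = 0 from by decide, show EU σ σ ρ = 0 from by decide, show EV σ σ ρ = -1 from by decide, hsa, hsb, hsc]
    simp only [pw_zero', pw_one', zpow_zero, zpow_one, zpow_neg_one, one_mul, mul_one]
    all_goals rw [hd113]
    all_goals first
    | rfl
    | simp [mul_comm, mul_left_comm, mul_assoc]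
  · exact hLtriv _ _ _ (by decide)
  · rw [show EA σ τ σ = 0 from by decide, show EB σ τ σ = 1 from by decide, show EC σ τ σ = 0 from by decide, show EU σ τ σ = -1 from by decide, show EV σ τ σ = 0 from by decide, hsa, hsb, hsc]
    simp only [pw_zero', pw_one', zpow_zero, zpow_one, zpow_neg_one, one_mul, mul_one]
    all_goals rw [hd121]
    all_goals first
    | rfl
    | simp [mul_comm, mul_left_comm, mul_assoc]
  · rw [show EA σ τ τ = 1 from by decide, show EB σ τ τ = 0 from by decide, show EC σ τ τ = 1 from by decide, show EU σ τ τ = 0 from by decide, show EV σ τ τ = 1 from by decide, hsa, hsb, hsc]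
    simp only [pw_zero', pw_one', zpow_zero, zpow_one, zpow_neg_one, one_mul, mul_one]
    all_goals rw [hd122]
    all_goals first
    | rfl
    | simp [mul_comm, mul_left_comm, mul_assoc]
  · rw [show EA σ τ ρ = 1 from by decide, show EB σ τ ρ = 1 from by decide, show EC σ τ ρ = 1 from by decide, show EU σ τ ρ = 0 from by decide, show EV σ τ ρ = 0 from by decide, hsa, hsb, hsc]
    simp only [pw_zero', pw_one', zpow_zero, zpow_one, zpow_neg_one, one_mul, mul_one]
    all_goals rw [hhappy σ τ ρ (by decide)]
    all_goals first
    | rfl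
    | simp [mul_comm, mul_left_comm, mul_assoc]
  · exact hLtriv _ _ _ (by decide)
  · rw [show EA σ ρ σ = 1 from by decide, show EB σ ρ σ = 1 from by decide, show EC σ ρ σ = 0 from by decide, show EU σ ρ σ = 1 from by decide, show EV σ ρ σ = 0 from by decide, hsa, hsb, hsc]
    simp only [pw_zero', pw_one', zpow_zero, zpow_one, zpow_neg_one, one_mul, mul_one]
    all_goals rw [hd131]
    all_goals first
    | rfl
    | simp [mul_comm, mul_left_comm, mul_assoc]
  · rw [show EA σ ρ τ = 1 from by decide, show EB σ ρ τ = 1 from by decide, show EC σ ρ τ = 1 from by decide, show EU σ ρ τ = 0 from by decide, show EV σ ρ τ = 0 from by decide, hsa, hsb, hsc]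
    simp only [pw_zero', pw_one', zpow_zero, zpow_one, zpow_neg_one, one_mul, mul_one]
    all_goals rw [hhappy σ ρ τ (by decide)]
    all_goals first
    | rfl
    | simp [mul_comm, mul_left_comm, mul_assoc]
  · rw [show EA σ ρ ρ = 0 from by decide, show EB σ ρ ρ = 0 from by decide, show EC σ ρ ρ = 1 from by decide, show EU σ ρ ρ = 0 from by decide, show EV σ ρ ρ = 1 from by decide, hsa, hsb, hsc]
    simp only [pw_zero', pw_one', zpow_zero, zpow_one, zpow_neg_one, one_mul, mul_one]
    all_goals rw [hd133]
    all_goals first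
    | rfl
    | simp [mul_comm, mul_left_comm, mul_assoc]
  · exact hLtriv _ _ _ (by decide)
  · exact hLtriv _ _ _ (by decide)
  · exact hLtriv _ _ _ (by decide)
  · exact hLtriv _ _ _ (by decide)
  · exact hLtriv _ _ _ (by decide)
  · rw [show EA τ σ σ = 0 from by decide, show EB τ σ σ = 1 from by decide, show EC τ σ σ = 0 from by decide, show EU τ σ σ = 0 from by decide, show EV τ σ σ = 1 from by decide, hsa, hsb, hsc]
    simp only [pw_zero', pw_one', zpow_zero, zpow_one, zpow_neg_one, one_mul, mul_one]
    all_goals rw [hd211]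
    all_goals first
    | rfl
    | simp [mul_comm, mul_left_comm, mul_assoc]
  · rw [show EA τ σ τ = 1 from by decide, show EB τ σ τ = 0 from by decide, show EC τ σ τ = 1 from by decide, show EU τ σ τ = 1 from by decide, show EV τ σ τ = 0 from by decide, hsa, hsb, hsc]
    simp only [pw_zero', pw_one', zpow_zero, zpow_one, zpow_neg_one, one_mul, mul_one]
    all_goals rw [hd212]
    all_goals first
    | rfl
    | simp [mul_comm, mul_left_comm, mul_assoc]
  · rw [show EA τ σ ρ = 1 from by decide, show EB τ σ ρ = 1 from by decide, show EC τ σ ρ = 1 from by decide, show EU τ σ ρ = 0 from by decide, show EV τ σ ρ = 0 from by decide, hsa, hsb, hsc]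
    simp only [pw_zero', pw_one', zpow_zero, zpow_one, zpow_neg_one, one_mul, mul_one]
    all_goals rw [hhappy τ σ ρ (by decide)]
    all_goals first
    | rfl
    | simp [mul_comm, mul_left_comm, mul_assoc]
  · exact hLtriv _ _ _ (by decide)
  · rw [show EA τ τ σ = 1 from by decide, show EB τ τ σ = 0 from by decide, show EC τ τ σ = 1 from by decide, show EU τ τ σ = 0 from by decide, show EV τ τ σ = -1 from by decide, hsa, hsb, hsc]
    simp only [pw_zero', pw_one', zpow_zero, zpow_one, zpow_neg_one, one_mul, mul_one]
    all_goals rw [hd221]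
    all_goals first
    | rfl
    | simp [mul_comm, mul_left_comm, mul_assoc]
  · rw [show EA τ τ τ = 0 from by decide, show EB τ τ τ = 1 from by decide, show EC τ τ τ = 0 from by decide, show EU τ τ τ = 0 from by decide, show EV τ τ τ = 0 from by decide, hsa, hsb, hsc]
    simp only [pw_zero', pw_one', zpow_zero, zpow_one, zpow_neg_one, one_mul, mul_one]
    all_goals first
    | rfl
    | simp [mul_comm, mul_left_comm, mul_assoc]
  · rw [show EA τ τ ρ = 1 from by decide, show EB τ τ ρ = 1 from by decide, show EC τ τ ρ = 1 from by decide, show EU τ τ ρ = 0 from by decide, show EV τ τ ρ = -1 from by decide, hsa, hsb, hsc]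
    simp only [pw_zero', pw_one', zpow_zero, zpow_one, zpow_neg_one, one_mul, mul_one]
    all_goals rw [hd223]
    all_goals first
    | rfl
    | simp [mul_comm, mul_left_comm, mul_assoc]
  · exact hLtriv _ _ _ (by decide)
  · rw [show EA τ ρ σ = 1 from by decide, show EB τ ρ σ = 1 from by decide, show EC τ ρ σ = 1 from by decide, show EU τ ρ σ = 0 from by decide, show EV τ ρ σ = 0 from by decide, hsa, hsb, hsc]
    simp only [pw_zero', pw_one', zpow_zero, zpow_one, zpow_neg_one, one_mul, mul_one]
    all_goals rw [hhappy τ ρ σ (by decide)]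
    all_goals first
    | rfl
    | simp [mul_comm, mul_left_comm, mul_assoc]
  · rw [show EA τ ρ τ = 1 from by decide, show EB τ ρ τ = 1 from by decide, show EC τ ρ τ = 1 from by decide, show EU τ ρ τ = -1 from by decide, show EV τ ρ τ = 0 from by decide, hsa, hsb, hsc]
    simp only [pw_zero', pw_one', zpow_zero, zpow_one, zpow_neg_one, one_mul, mul_one]
    all_goals rw [hd232]
    all_goals first
    | rfl
    | simp [mul_comm, mul_left_comm, mul_assoc]
  · rw [show EA τ ρ ρ = 0 from by decide, show EB τ ρ ρ = 0 from by decide, show EC τ ρ ρ = 0 from by decide, show EU τ ρ ρ = 0 from by decide, show EV τ ρ ρ = 1 from by decide, hsa, hsb, hsc]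
    simp only [pw_zero', pw_one', zpow_zero, zpow_one, zpow_neg_one, one_mul, mul_one]
    all_goals first
    | rfl
    | simp [mul_comm, mul_left_comm, mul_assoc]
  · exact hLtriv _ _ _ (by decide)
  · exact hLtriv _ _ _ (by decide)
  · exact hLtriv _ _ _ (by decide)
  · exact hLtriv _ _ _ (by decide)
  · exact hLtriv _ _ _ (by decide)
  · rw [show EA ρ σ σ = 1 from by decide, show EB ρ σ σ = 1 from by decide, show EC ρ σ σ = 0 from by decide, show EU ρ σ σ = 0 from by decide, show EV ρ σ σ = 1 from by decide, hsa, hsb, hsc]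
    simp only [pw_zero', pw_one', zpow_zero, zpow_one, zpow_neg_one, one_mul, mul_one]
    all_goals rw [hd311]
    all_goals first
    | rfl
    | simp [mul_comm, mul_left_comm, mul_assoc]
  · rw [show EA ρ σ τ = 1 from by decide, show EB ρ σ τ = 1 from by decide, show EC ρ σ τ = 1 from by decide, show EU ρ σ τ = 0 from by decide, show EV ρ σ τ = 0 from by decide, hsa, hsb, hsc]
    simp only [pw_zero', pw_one', zpow_zero, zpow_one, zpow_neg_one, one_mul, mul_one]
    all_goals rw [hhappy ρ σ τ (by decide)]
    all_goals first
    | rfl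
    | simp [mul_comm, mul_left_comm, mul_assoc]
  · rw [show EA ρ σ ρ = 0 from by decide, show EB ρ σ ρ = 0 from by decide, show EC ρ σ ρ = 1 from by decide, show EU ρ σ ρ = -1 from by decide, show EV ρ σ ρ = 0 from by decide, hsa, hsb, hsc]
    simp only [pw_zero', pw_one', zpow_zero, zpow_one, zpow_neg_one, one_mul, mul_one]
    all_goals rw [hd313]
    all_goals first
    | rfl
    | simp [mul_comm, mul_left_comm, mul_assoc]
  · exact hLtriv _ _ _ (by decide)
  · rw [show EA ρ τ σ = 1 from by decide, show EB ρ τ σ = 1 from by decide, show EC ρ τ σ = 1 from by decide, show EU ρ τ σ = 0 from by decide, show EV ρ τ σ = 0 from by decide, hsa, hsb, hsc]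
    simp only [pw_zero', pw_one', zpow_zero, zpow_one, zpow_neg_one, one_mul, mul_one]
    all_goals rw [hhappy ρ τ σ (by decide)]
    all_goals first
    | rfl
    | simp [mul_comm, mul_left_comm, mul_assoc]
  · rw [show EA ρ τ τ = 1 from by decide, show EB ρ τ τ = 1 from by decide, show EC ρ τ τ = 1 from by decide, show EU ρ τ τ = 0 from by decide, show EV ρ τ τ = 1 from by decide, hsa, hsb, hsc]
    simp only [pw_zero', pw_one', zpow_zero, zpow_one, zpow_neg_one, one_mul, mul_one]
    all_goals rw [hd322]
    all_goals first
    | rfl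
    | simp [mul_comm, mul_left_comm, mul_assoc]
  · rw [show EA ρ τ ρ = 0 from by decide, show EB ρ τ ρ = 0 from by decide, show EC ρ τ ρ = 0 from by decide, show EU ρ τ ρ = 1 from by decide, show EV ρ τ ρ = 0 from by decide, hsa, hsb, hsc]
    simp only [pw_zero', pw_one', zpow_zero, zpow_one, zpow_neg_one, one_mul, mul_one]
    all_goals first
    | rfl
    | simp [mul_comm, mul_left_comm, mul_assoc]
  · exact hLtriv _ _ _ (by decide)
  · rw [show EA ρ ρ σ = 0 from by decide, show EB ρ ρ σ = 0 from by decide, show EC ρ ρ σ = 1 from by decide, show EU ρ ρ σ = 0 from by decide, show EV ρ ρ σ = -1 from by decide, hsa, hsb, hsc]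
    simp only [pw_zero', pw_one', zpow_zero, zpow_one, zpow_neg_one, one_mul, mul_one]
    all_goals rw [hd331]
    all_goals first
    | rfl
    | simp [mul_comm, mul_left_comm, mul_assoc]
  · rw [show EA ρ ρ τ = 0 from by decide, show EB ρ ρ τ = 0 from by decide, show EC ρ ρ τ = 0 from by decide, show EU ρ ρ τ = 0 from by decide, show EV ρ ρ τ = -1 from by decide, hsa, hsb, hsc]
    simp only [pw_zero', pw_one', zpow_zero, zpow_one, zpow_neg_one, one_mul, mul_one]
    all_goals rw [hd332]
    all_goals first
    | rfl
    | simp [mul_comm, mul_left_comm, mul_assoc]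
  · rw [show EA ρ ρ ρ = 0 from by decide, show EB ρ ρ ρ = 0 from by decide, show EC ρ ρ ρ = 1 from by decide, show EU ρ ρ ρ = 0 from by decide, show EV ρ ρ ρ = 0 from by decide, hsa, hsb, hsc]
    simp only [pw_zero', pw_one', zpow_zero, zpow_one, zpow_neg_one, one_mul, mul_one]
    all_goals first
    | rfl
    | simp [mul_comm, mul_left_comm, mul_assoc]

end Hpy

theorem statement9 (k : Type*) [Field k] (hk : ringChar k ≠ 2) :
    Nonempty (Z3h k ≃*
      Multiplicative (ZMod 2) × Multiplicative (ZMod 2) × Multiplicative (ZMod 2)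
        × kˣ × kˣ) := by
  exact ⟨(MulEquiv.ofBijective (Hpy.bigG k) ⟨Hpy.bigG_inj k hk, Hpy.bigG_surj k hk⟩).symm⟩
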